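/- arXiv:1604.05671 — 8 statements merged into one kernel-verified Lean document; each statement's English description precedes it below -/
import Mathlib

section
/- Let n be a positive integer and let x_1, ..., x_n be complex numbers, each different from 1. Then (∏_{i=1}^{n} (1 - x_i)) · (∑_{i=1}^{n} x_i/(x_i - 1)) = ∑_{k=1}^{n} (-1)^k · k · e_k, where e_k denotes the k-th elementary symmetric polynomial in x_1, ..., x_n. -/
/-- The `k`-th elementary symmetric polynomial in `x 0, …, x (n-1)`. -/
noncomputable def esymm {n : ℕ} (x : Fin n → ℂ) (k : ℕ) : ℂ :=
  ∑ A ∈ Finset.powersetCard k (Finset.univ : Finset (Fin n)), ∏ i ∈ A, x i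

/-- For `x_1, …, x_n ∈ ℂ`, each different from `1`,
`(∏ (1 - x_i)) · (∑ x_i/(x_i - 1)) = ∑_{k=1}^n (-1)^k k e_k`. -/
theorem stmt_0 (n : ℕ) (hn : 0 < n) (x : Fin n → ℂ) (hx : ∀ i, x i ≠ 1) :
    (∏ i, (1 - x i)) * (∑ i, x i / (x i - 1)) =
      ∑ k ∈ Finset.Icc 1 n, (-1 : ℂ) ^ k * (k : ℂ) * esymm x k := by
  classical
  set F : Finset (Fin n) → ℂ := fun B => ∏ j ∈ B, (-x j) with hF
  have key : ∀ s : Finset (Fin n), ∏ j ∈ s, (1 - x j) = ∑ B ∈ s.powerset, F B := by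
    intro s
    have h := Finset.prod_add (fun j => -x j) (fun _ => (1 : ℂ)) s
    simpa [hF, sub_eq_neg_add] using h
  have h1 : (∏ i, (1 - x i)) * (∑ i, x i / (x i - 1))
      = ∑ i, (-x i) * ∏ j ∈ Finset.univ.erase i, (1 - x j) := by
    rw [Finset.mul_sum]
    refine Finset.sum_congr rfl fun i _ => ?_
    rw [← Finset.prod_erase_mul _ _ (Finset.mem_univ i)]
    have hxi : x i - 1 ≠ 0 := sub_ne_zero.mpr (hx i)
    field_simp
    ring
  have h2 : ∑ i, (-x i) * ∏ j ∈ Finset.univ.erase i, (1 - x j)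
      = ∑ i, ∑ B ∈ (Finset.univ.erase i).powerset, F (insert i B) := by
    refine Finset.sum_congr rfl fun i _ => ?_
    rw [key, Finset.mul_sum]
    refine Finset.sum_congr rfl fun B hB => ?_
    have hiB : i ∉ B := fun h =>
      (Finset.mem_erase.mp (Finset.mem_powerset.mp hB h)).1 rfl
    rw [hF]
    simp [Finset.prod_insert hiB]
  have h3 : ∑ i, ∑ B ∈ (Finset.univ.erase i).powerset, F (insert i B)
      = ∑ B ∈ (Finset.univ : Finset (Fin n)).powerset, (B.card : ℂ) * F B := by
    have hcard : ∀ B : Finset (Fin n), (B.card : ℂ) * F B = ∑ i ∈ B, F B := by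
      intro B; rw [Finset.sum_const, nsmul_eq_mul]
    simp_rw [hcard]
    have step : ∀ i : Fin n,
        ∑ B ∈ (Finset.univ.erase i).powerset, F (insert i B)
        = ∑ B ∈ (Finset.univ : Finset (Fin n)).powerset.filter (fun B => i ∈ B), F B := by
      intro i
      refine Finset.sum_bij' (fun B _ => insert i B) (fun B _ => B.erase i) ?_ ?_ ?_ ?_ ?_
      · intro B hB
        simp only [Finset.mem_filter, Finset.mem_powerset]
        exact ⟨Finset.subset_univ _, Finset.mem_insert_self i B⟩
      · intro B hB
        simp only [Finset.mem_powerset]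
        intro a ha
        exact Finset.mem_erase.mpr ⟨(Finset.mem_erase.mp ha).1, Finset.mem_univ a⟩
      · intro B hB
        have hiB : i ∉ B := fun h =>
          (Finset.mem_erase.mp (Finset.mem_powerset.mp hB h)).1 rfl
        exact Finset.erase_insert hiB
      · intro B hB
        exact Finset.insert_erase (Finset.mem_filter.mp hB).2
      · intro B hB; rfl
    simp_rw [step, Finset.sum_filter]
    rw [Finset.sum_comm]
    refine Finset.sum_congr rfl fun B _ => ?_
    rw [← Finset.sum_filter]
    congr 1
    ext a
    simp
  have h4 : ∑ B ∈ (Finset.univ : Finset (Fin n)).powerset, (B.card : ℂ) * F B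
      = ∑ k ∈ Finset.Icc 1 n, (-1 : ℂ) ^ k * (k : ℂ) * esymm x k := by
    rw [Finset.powerset_card_disjiUnion]
    refine (Finset.sum_disjiUnion _ _ _).trans ?_
    have hterm : ∀ k ∈ Finset.range (Finset.univ.card (α := Fin n) + 1),
        ∑ B ∈ Finset.powersetCard k (Finset.univ : Finset (Fin n)), (B.card : ℂ) * F B
        = (-1 : ℂ) ^ k * (k : ℂ) * esymm x k := by
      intro k _
      rw [esymm, Finset.mul_sum]
      refine Finset.sum_congr rfl fun B hB => ?_
      have hcard : B.card = k := (Finset.mem_powersetCard.mp hB).2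
      have hFB : F B = (-1 : ℂ) ^ k * ∏ j ∈ B, x j := by
        rw [hF]
        have : ∀ j : Fin n, -x j = (-1) * x j := fun j => by ring
        simp_rw [this]
        rw [Finset.prod_mul_distrib, Finset.prod_const, hcard]
      rw [hFB, hcard]
      ring
    rw [Finset.sum_congr rfl hterm]
    have hn1 : Finset.range (Finset.univ.card (α := Fin n) + 1)
        = insert 0 (Finset.Icc 1 n) := by
      ext k
      simp only [Finset.mem_range, Finset.mem_insert, Finset.mem_Icc,
        Finset.card_univ, Fintype.card_fin]
      omega
    rw [hn1, Finset.sum_insert (by simp)]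
    simp
  rw [h1, h2, h3, h4]
end

section
/- Let n be a positive integer and let x_1, ..., x_n be complex numbers, each different from -1. Then (∏_{i=1}^{n} (1 + x_i)) · (∑_{i=1}^{n} x_i/(x_i + 1)) = ∑_{k=1}^{n} k · e_k, where e_k denotes the k-th elementary symmetric polynomial in x_1, ..., x_n. -/
/-- For `x_1, …, x_n ∈ ℂ`, each different from `-1`,
`(∏ (1 + x_i)) · (∑ x_i/(x_i + 1)) = ∑_{k=1}^n k e_k`. -/
theorem stmt_1 (n : ℕ) (hn : 0 < n) (x : Fin n → ℂ) (hx : ∀ i, x i ≠ -1) :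
    (∏ i, (1 + x i)) * (∑ i, x i / (x i + 1)) =
      ∑ k ∈ Finset.Icc 1 n, (k : ℂ) * esymm x k := by
  have h1 : ∀ i, x i + 1 ≠ 0 := by
    intro i h
    exact hx i (by linear_combination h)
  -- LHS
  have lhs_eq : (∏ i, (1 + x i)) * (∑ i, x i / (x i + 1)) =
      ∑ i, x i * ∑ B ∈ (Finset.univ.erase i).powerset, ∏ j ∈ B, x j := by
    rw [Finset.mul_sum]
    refine Finset.sum_congr rfl fun i _ => ?_
    rw [← Finset.mul_prod_erase _ _ (Finset.mem_univ i)]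
    have hp : ∏ j ∈ Finset.univ.erase i, (1 + x j)
        = ∑ B ∈ (Finset.univ.erase i).powerset, ∏ j ∈ B, x j := by
      simp_rw [add_comm (1:ℂ)]
      rw [Finset.prod_add]
      simp
    rw [hp]
    field_simp [h1 i]
    ring
  rw [lhs_eq]
  -- RHS
  have rhs_eq : ∑ k ∈ Finset.Icc 1 n, (k : ℂ) * esymm x k =
      ∑ A ∈ (Finset.univ : Finset (Fin n)).powerset, (A.card : ℂ) * ∏ i ∈ A, x i := by
    rw [Finset.sum_powerset]
    simp only [Finset.card_univ, Fintype.card_fin]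
    rw [Finset.range_eq_Ico, Finset.sum_eq_sum_Ico_succ_bot (by omega), Finset.Ico_add_one_right_eq_Icc]
    have h0 : ∑ t ∈ Finset.powersetCard 0 (Finset.univ : Finset (Fin n)),
        (t.card : ℂ) * ∏ i ∈ t, x i = 0 := by simp
    rw [h0, zero_add]
    refine Finset.sum_congr rfl fun k hk => ?_
    rw [esymm, Finset.mul_sum]
    refine Finset.sum_congr rfl fun t ht => ?_
    rw [(Finset.mem_powersetCard.mp ht).2]
  rw [rhs_eq]
  -- now swap sums
  have hcard : ∀ A : Finset (Fin n), (A.card : ℂ) * ∏ i ∈ A, x i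
      = ∑ i ∈ A, ∏ j ∈ A, x j := by
    intro A; rw [Finset.sum_const, nsmul_eq_mul]
  simp_rw [hcard]
  rw [Finset.sum_comm'
    (s' := fun i => (Finset.univ : Finset (Fin n)).powerset.filter (fun A => i ∈ A))
    (t' := (Finset.univ : Finset (Fin n)))
    (by intro A i; simp [and_comm])]
  refine Finset.sum_congr rfl fun i _ => ?_
  rw [Finset.mul_sum]
  refine Finset.sum_nbij' (fun B => insert i B) (fun A => A.erase i) ?_ ?_ ?_ ?_ ?_
  · intro B hB
    simp only [Finset.mem_powerset] at hB
    simp only [Finset.mem_filter, Finset.mem_powerset]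
    exact ⟨Finset.subset_univ _, Finset.mem_insert_self i B⟩
  · intro A hA
    simp only [Finset.mem_filter, Finset.mem_powerset] at hA
    simp only [Finset.mem_powerset]
    exact Finset.erase_subset_erase _ (Finset.subset_univ A)
  · intro B hB
    simp only [Finset.mem_powerset] at hB
    exact Finset.erase_insert (fun hi => (Finset.mem_erase.mp (hB hi)).1 rfl)
  · intro A hA
    simp only [Finset.mem_filter] at hA
    exact Finset.insert_erase hA.2
  · intro B hB
    simp only [Finset.mem_powerset] at hB
    have hiB : i ∉ B := fun hi => (Finset.mem_erase.mp (hB hi)).1 rfl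
    rw [Finset.prod_insert hiB]
end

section
/- Let f be a multiplicative arithmetic function with complex values, let n be a positive integer, and suppose f(p) ≠ 1 for every prime p dividing n. Then ∑_{d | n} μ(d) ω(d) f(d) = (∑_{d | n} μ(d) f(d)) · (∑_{p | n} f(p)/(f(p) - 1)), where the sum over p runs over the distinct primes dividing n. -/
open ArithmeticFunction

open Finset in
lemma aux_prod_one_sub (S : Finset ℕ) (g : ℕ → ℂ) :
    ∑ t ∈ S.powerset, (-1 : ℂ) ^ t.card * ∏ p ∈ t, g p = ∏ p ∈ S, (1 - g p) := by
  classical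
  induction S using Finset.induction_on with
  | empty => simp
  | insert a S ha ih =>
    rw [Finset.sum_powerset_insert ha, Finset.prod_insert ha, ← ih]
    have h : ∀ t ∈ S.powerset,
        (-1 : ℂ) ^ (insert a t).card * ∏ p ∈ insert a t, g p =
        (-g a) * ((-1 : ℂ) ^ t.card * ∏ p ∈ t, g p) := by
      intro t ht
      have hat : a ∉ t := fun h => ha (Finset.mem_powerset.mp ht h)
      rw [Finset.card_insert_of_notMem hat, Finset.prod_insert hat]
      ring
    rw [Finset.sum_congr rfl h, ← Finset.mul_sum]
    ring

open Finset in
lemma aux_key (S : Finset ℕ) (g : ℕ → ℂ) (hg : ∀ p ∈ S, g p ≠ 1) :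
    ∑ t ∈ S.powerset, (-1 : ℂ) ^ t.card * t.card * ∏ p ∈ t, g p =
      (∏ p ∈ S, (1 - g p)) * ∑ p ∈ S, g p / (g p - 1) := by
  classical
  induction S using Finset.induction_on with
  | empty => simp
  | insert a S ha ih =>
    have hga : g a ≠ 1 := hg a (Finset.mem_insert_self a S)
    have hga' : g a - 1 ≠ 0 := sub_ne_zero.mpr hga
    have ihS := ih (fun p hp => hg p (Finset.mem_insert_of_mem hp))
    rw [Finset.sum_powerset_insert ha, Finset.prod_insert ha, Finset.sum_insert ha]
    have h : ∀ t ∈ S.powerset,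
        (-1 : ℂ) ^ (insert a t).card * (insert a t).card * ∏ p ∈ insert a t, g p =
        (-g a) * ((-1 : ℂ) ^ t.card * t.card * ∏ p ∈ t, g p)
          + (-g a) * ((-1 : ℂ) ^ t.card * ∏ p ∈ t, g p) := by
      intro t ht
      have hat : a ∉ t := fun h => ha (Finset.mem_powerset.mp ht h)
      rw [Finset.card_insert_of_notMem hat, Finset.prod_insert hat]
      push_cast
      ring
    rw [Finset.sum_congr rfl h, Finset.sum_add_distrib, ← Finset.mul_sum, ← Finset.mul_sum,
      ihS, aux_prod_one_sub]
    have hfrac : g a / (g a - 1) * (g a - 1) = g a := div_mul_cancel₀ _ hga'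
    field_simp
    ring

/-- For a multiplicative arithmetic function `f` with `f p ≠ 1` for
every prime `p ∣ n`,
`∑_{d ∣ n} μ(d) ω(d) f(d) = (∑_{d ∣ n} μ(d) f(d)) · (∑_{p ∣ n} f p / (f p - 1))`. -/
theorem stmt_3 (f : ArithmeticFunction ℂ) (hf : f.IsMultiplicative) (n : ℕ) (hn : 0 < n)
    (hfp : ∀ p : ℕ, p.Prime → p ∣ n → f p ≠ 1) :
    ∑ d ∈ n.divisors, (moebius d : ℂ) * (d.primeFactors.card : ℂ) * f d =
      (∑ d ∈ n.divisors, (moebius d : ℂ) * f d) *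
        (∑ p ∈ n.primeFactors, f p / (f p - 1)) := by
  classical
  have hn0 : n ≠ 0 := hn.ne'
  -- restrict sums to squarefree divisors
  have hrestr : ∀ (F : ℕ → ℂ),
      ∑ d ∈ n.divisors, (moebius d : ℂ) * F d =
      ∑ d ∈ n.divisors with Squarefree d, (moebius d : ℂ) * F d := by
    intro F
    rw [Finset.sum_filter]
    refine Finset.sum_congr rfl fun d _ => ?_
    by_cases hd : Squarefree d
    · simp [hd]
    · simp [hd, moebius_eq_zero_of_not_squarefree hd]
  have hfac : (UniqueFactorizationMonoid.normalizedFactors n).toFinset = n.primeFactors := by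
    rw [Nat.factors_eq]
    exact Nat.toFinset_factors n
  have hterm : ∀ t ∈ n.primeFactors.powerset,
      (∀ p ∈ t, p.Prime) ∧
      (moebius (∏ p ∈ t, p) : ℂ) = (-1 : ℂ) ^ t.card ∧
      (∏ p ∈ t, p).primeFactors = t ∧
      f (∏ p ∈ t, p) = ∏ p ∈ t, f p := by
    intro t ht
    have hts := Finset.mem_powerset.mp ht
    have hprime : ∀ p ∈ t, p.Prime := fun p hp => Nat.prime_of_mem_primeFactors (hts hp)
    refine ⟨hprime, ?_, Nat.primeFactors_prod hprime, hf.map_prod_of_subset_primeFactors n t hts⟩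
    have hμ : moebius (∏ p ∈ t, p) = (-1 : ℤ) ^ t.card := by
      rw [ArithmeticFunction.IsMultiplicative.map_prod_of_prime
        isMultiplicative_moebius t hprime]
      rw [Finset.prod_congr rfl fun p hp => moebius_apply_prime (hprime p hp)]
      simp
    rw [hμ]
    push_cast
    ring
  have hμf : ∑ d ∈ n.divisors, (moebius d : ℂ) * f d = ∏ p ∈ n.primeFactors, (1 - f p) := by
    rw [hrestr, Nat.sum_divisors_filter_squarefree hn0, hfac, ← aux_prod_one_sub]
    refine Finset.sum_congr rfl fun t ht => ?_
    obtain ⟨_, h1, _, h3⟩ := hterm t ht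
    simp only [Finset.prod_val, Function.id_def] at *
    rw [h1, h3]
  have hLHS : ∑ d ∈ n.divisors, (moebius d : ℂ) * (d.primeFactors.card : ℂ) * f d =
      ∑ t ∈ n.primeFactors.powerset, (-1 : ℂ) ^ t.card * t.card * ∏ p ∈ t, f p := by
    have : ∀ d, (moebius d : ℂ) * (d.primeFactors.card : ℂ) * f d =
        (moebius d : ℂ) * ((d.primeFactors.card : ℂ) * f d) := fun d => by ring
    simp_rw [this]
    rw [hrestr, Nat.sum_divisors_filter_squarefree hn0, hfac]
    refine Finset.sum_congr rfl fun t ht => ?_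
    obtain ⟨_, h1, h2, h3⟩ := hterm t ht
    simp only [Finset.prod_val, Function.id_def] at *
    rw [h1, h2, h3]
    ring
  rw [hLHS, hμf]
  exact aux_key n.primeFactors (fun p => f p)
    (fun p hp => hfp p (Nat.prime_of_mem_primeFactors hp) (Nat.dvd_of_mem_primeFactors hp))
end

section
/- Let f be a multiplicative arithmetic function with complex values, let n be a positive integer, and suppose f(p) ≠ -1 for every prime p dividing n. Then ∑_{d | n} |μ(d)| ω(d) f(d) = (∑_{d | n} |μ(d)| f(d)) · (∑_{p | n} f(p)/(1 + f(p))), where the sum over p runs over the distinct primes dividing n. -/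
open ArithmeticFunction

lemma auxB (g : ℕ → ℂ) (P : Finset ℕ) :
    ∑ S ∈ P.powerset, ∏ p ∈ S, g p = ∏ p ∈ P, (1 + g p) := by
  classical
  induction P using Finset.induction_on with
  | empty => simp
  | @insert a P ha ih =>
    rw [Finset.sum_powerset_insert ha, Finset.prod_insert ha, ← ih]
    have h2 : ∑ S ∈ P.powerset, ∏ p ∈ insert a S, g p
        = ∑ S ∈ P.powerset, g a * ∏ p ∈ S, g p := by
      refine Finset.sum_congr rfl fun S hS => ?_
      rw [Finset.prod_insert fun h => ha (Finset.mem_powerset.mp hS h)]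
    rw [h2, ← Finset.mul_sum]
    ring

lemma auxA (g : ℕ → ℂ) (P : Finset ℕ) (hg : ∀ p ∈ P, 1 + g p ≠ 0) :
    ∑ S ∈ P.powerset, (S.card : ℂ) * ∏ p ∈ S, g p
      = (∏ p ∈ P, (1 + g p)) * ∑ p ∈ P, g p / (1 + g p) := by
  classical
  induction P using Finset.induction_on with
  | empty => simp
  | @insert a P ha ih =>
    have h1 : 1 + g a ≠ 0 := hg a (Finset.mem_insert_self a P)
    have hg' : ∀ p ∈ P, 1 + g p ≠ 0 := fun p hp => hg p (Finset.mem_insert_of_mem hp)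
    rw [Finset.sum_powerset_insert ha, Finset.prod_insert ha, Finset.sum_insert ha,
      ih hg']
    have h2 : ∑ S ∈ P.powerset, ((insert a S).card : ℂ) * ∏ p ∈ insert a S, g p
        = ∑ S ∈ P.powerset, ((S.card : ℂ) + 1) * (g a * ∏ p ∈ S, g p) := by
      refine Finset.sum_congr rfl fun S hS => ?_
      have haS : a ∉ S := fun h => ha (Finset.mem_powerset.mp hS h)
      rw [Finset.prod_insert haS, Finset.card_insert_of_notMem haS]
      push_cast
      ring
    rw [h2]
    have expand : ∑ S ∈ P.powerset, ((S.card : ℂ) + 1) * (g a * ∏ p ∈ S, g p)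
        = g a * (∑ S ∈ P.powerset, (S.card : ℂ) * ∏ p ∈ S, g p)
          + g a * ∑ S ∈ P.powerset, ∏ p ∈ S, g p := by
      rw [Finset.mul_sum, Finset.mul_sum, ← Finset.sum_add_distrib]
      refine Finset.sum_congr rfl fun S _ => ?_
      ring
    rw [expand, ih hg', auxB]
    field_simp
    ring

/-- For a multiplicative arithmetic function `f` with `f p ≠ -1` for
every prime `p ∣ n`,
`∑_{d ∣ n} |μ(d)| ω(d) f(d) = (∑_{d ∣ n} |μ(d)| f(d)) · (∑_{p ∣ n} f p / (1 + f p))`. -/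
theorem stmt_5 (f : ArithmeticFunction ℂ) (hf : f.IsMultiplicative) (n : ℕ) (hn : 0 < n)
    (hfp : ∀ p : ℕ, p.Prime → p ∣ n → f p ≠ -1) :
    ∑ d ∈ n.divisors, ((moebius d).natAbs : ℂ) * (d.primeFactors.card : ℂ) * f d =
      (∑ d ∈ n.divisors, ((moebius d).natAbs : ℂ) * f d) *
        (∑ p ∈ n.primeFactors, f p / (1 + f p)) := by
  classical
  have key : ∀ h : ℕ → ℂ, ∑ d ∈ n.divisors, ((moebius d).natAbs : ℂ) * h d
      = ∑ d ∈ n.divisors with Squarefree d, h d := by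
    intro h
    rw [Finset.sum_filter]
    refine Finset.sum_congr rfl fun d _ => ?_
    by_cases hs : Squarefree d
    · simp [hs, moebius_apply_of_squarefree hs, Int.natAbs_pow]
    · simp [hs, moebius_eq_zero_of_not_squarefree hs]
  have hPF : (UniqueFactorizationMonoid.normalizedFactors n).toFinset = n.primeFactors := by
    rw [Nat.factors_eq]
    exact Nat.toFinset_factors n
  have hprodid : ∀ S : Finset ℕ, (S.val.prod : ℕ) = ∏ p ∈ S, p := by
    intro S
    rw [Finset.prod_val]; rfl
  simp only [mul_assoc]
  rw [key, key, Nat.sum_divisors_filter_squarefree hn.ne',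
    Nat.sum_divisors_filter_squarefree hn.ne', hPF]
  have hsub : ∀ S ∈ n.primeFactors.powerset, S ⊆ n.primeFactors :=
    fun S hS => Finset.mem_powerset.mp hS
  have step1 : ∑ S ∈ n.primeFactors.powerset, ((S.val.prod.primeFactors.card : ℂ) * f S.val.prod)
      = ∑ S ∈ n.primeFactors.powerset, (S.card : ℂ) * ∏ p ∈ S, f p := by
    refine Finset.sum_congr rfl fun S hS => ?_
    have hp : ∀ p ∈ S, p.Prime := fun p hp => Nat.prime_of_mem_primeFactors (hsub S hS hp)
    rw [hprodid S, Nat.primeFactors_prod hp, hf.map_prod_of_subset_primeFactors n S (hsub S hS)]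
  have step2 : ∑ S ∈ n.primeFactors.powerset, f S.val.prod
      = ∑ S ∈ n.primeFactors.powerset, ∏ p ∈ S, f p := by
    refine Finset.sum_congr rfl fun S hS => ?_
    rw [hprodid S, hf.map_prod_of_subset_primeFactors n S (hsub S hS)]
  rw [step1, step2, auxB, auxA]
  intro p hp
  have := hfp p (Nat.prime_of_mem_primeFactors hp) (Nat.dvd_of_mem_primeFactors hp)
  intro h
  apply this
  linear_combination h
end

section
/- Let n and k be positive integers. Then ∑_{d | n} μ(d) ω(d) (n/d)^k = J_k(n) · ∑_{p | n} 1/(1 - p^k), where the sum on the right runs over the distinct primes p dividing n (and is 0 when n = 1). -/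
open ArithmeticFunction

/-- Jordan's totient function `J_k(n) = n^k ∏_{p ∣ n} (1 - 1/p^k)`, as a complex number. -/
noncomputable def jordanTotient (k n : ℕ) : ℂ :=
  (n : ℂ) ^ k * ∏ p ∈ n.primeFactors, (1 - 1 / (p : ℂ) ^ k)

/-- Key combinatorial identity:
`∑_{S ⊆ P} |S| ∏_{q ∈ S} g q = ∑_{p ∈ P} g p ∏_{q ∈ P \ {p}} (1 + g q)`. -/
lemma key_powerset_sum (g : ℕ → ℂ) (P : Finset ℕ) :
    ∑ S ∈ P.powerset, (S.card : ℂ) * ∏ q ∈ S, g q =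
      ∑ p ∈ P, g p * ∏ q ∈ P.erase p, (1 + g q) := by
  classical
  induction P using Finset.induction_on with
  | empty => simp
  | @insert a P ha ih =>
    have hE : ∑ S ∈ P.powerset, ∏ q ∈ S, g q = ∏ q ∈ P, (1 + g q) := by
      have := Finset.prod_add (fun q : ℕ => g q) (fun _ : ℕ => (1 : ℂ)) P
      simp only [Finset.prod_const_one, mul_one] at this
      rw [show (fun q : ℕ => 1 + g q) = fun q => g q + 1 by funext q; ring]
      exact this.symm
    rw [Finset.sum_powerset_insert ha]
    have h2 : ∀ S ∈ P.powerset, ((insert a S).card : ℂ) * ∏ q ∈ insert a S, g q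
        = (S.card + 1) * (g a * ∏ q ∈ S, g q) := by
      intro S hS
      have haS : a ∉ S := fun h => ha (Finset.mem_powerset.mp hS h)
      rw [Finset.card_insert_of_notMem haS, Finset.prod_insert haS]
      push_cast; ring
    rw [Finset.sum_congr rfl h2]
    have hsplit : ∑ S ∈ P.powerset, ((S.card : ℂ) + 1) * (g a * ∏ q ∈ S, g q)
        = g a * ((∑ S ∈ P.powerset, (S.card : ℂ) * ∏ q ∈ S, g q)
            + ∑ S ∈ P.powerset, ∏ q ∈ S, g q) := by
      rw [mul_add, Finset.mul_sum, Finset.mul_sum, ← Finset.sum_add_distrib]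
      exact Finset.sum_congr rfl fun S _ => by ring
    rw [hsplit, ih, hE]
    rw [Finset.sum_insert ha, Finset.erase_insert ha]
    have h3 : ∀ p ∈ P, g p * ∏ q ∈ (insert a P).erase p, (1 + g q)
        = (1 + g a) * (g p * ∏ q ∈ P.erase p, (1 + g q)) := by
      intro p hp
      have hpa : p ≠ a := fun h => ha (h ▸ hp)
      rw [Finset.erase_insert_of_ne hpa.symm,
        Finset.prod_insert (fun h => ha (Finset.erase_subset _ _ h))]
      ring
    rw [Finset.sum_congr rfl h3, ← Finset.mul_sum]
    ring

/-- For positive integers `n, k`,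
`∑_{d ∣ n} μ(d) ω(d) (n/d)^k = J_k(n) · ∑_{p ∣ n} 1/(1 - p^k)`. -/
theorem stmt_7 (n k : ℕ) (hn : 0 < n) (hk : 0 < k) :
    ∑ d ∈ n.divisors, (moebius d : ℂ) * (d.primeFactors.card : ℂ) * ((n / d : ℕ) : ℂ) ^ k =
      jordanTotient k n * ∑ p ∈ n.primeFactors, 1 / (1 - (p : ℂ) ^ k) := by
  classical
  have hn0 : n ≠ 0 := hn.ne'
  set P := n.primeFactors with hP
  have hPprime : ∀ p ∈ P, p.Prime := fun p hp => Nat.prime_of_mem_primeFactors hp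
  -- restrict to squarefree divisors
  have hfilter : ∑ d ∈ n.divisors, (moebius d : ℂ) * (d.primeFactors.card : ℂ)
        * ((n / d : ℕ) : ℂ) ^ k
      = ∑ d ∈ n.divisors with Squarefree d,
        (moebius d : ℂ) * (d.primeFactors.card : ℂ) * ((n / d : ℕ) : ℂ) ^ k := by
    refine (Finset.sum_filter_of_ne fun d _ hd => ?_).symm
    by_contra hsq
    rw [moebius_eq_zero_of_not_squarefree hsq] at hd
    simp at hd
  rw [hfilter, Nat.sum_divisors_filter_squarefree hn0]
  have hfac : (UniqueFactorizationMonoid.normalizedFactors n).toFinset = P := by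
    rw [Nat.factors_eq]; exact Nat.toFinset_factors n
  rw [hfac]
  -- compute each term
  have hterm : ∀ S ∈ P.powerset,
      (moebius S.val.prod : ℂ) * ((S.val.prod.primeFactors.card : ℕ) : ℂ)
        * ((n / S.val.prod : ℕ) : ℂ) ^ k
      = (n : ℂ) ^ k * ((S.card : ℂ) * ∏ q ∈ S, -(1 / (q : ℂ) ^ k)) := by
    intro S hS
    have hSsub : S ⊆ P := Finset.mem_powerset.mp hS
    have hSprime : ∀ p ∈ S, p.Prime := fun p hp => hPprime p (hSsub hp)
    have hprodval : S.val.prod = ∏ q ∈ S, q := by rw [Finset.prod_val]; rfl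
    have hdvd : (∏ q ∈ S, q) ∣ n :=
      dvd_trans (Finset.prod_dvd_prod_of_subset _ _ _ hSsub) (Nat.prod_primeFactors_dvd n)
    have hdne : (∏ q ∈ S, q) ≠ 0 :=
      Finset.prod_ne_zero_iff.mpr fun q hq => (hSprime q hq).ne_zero
    have hmoeb : (moebius (∏ q ∈ S, q) : ℂ) = (-1 : ℂ) ^ S.card := by
      have : moebius (∏ q ∈ S, q) = ∏ q ∈ S, moebius q :=
        ArithmeticFunction.IsMultiplicative.map_prod_of_prime
          ArithmeticFunction.isMultiplicative_moebius S hSprime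
      rw [this]
      push_cast
      rw [Finset.prod_congr rfl fun q hq => by
        rw [ArithmeticFunction.moebius_apply_prime (hSprime q hq)]]
      simp
    have hcard : (∏ q ∈ S, q).primeFactors = S := Nat.primeFactors_prod hSprime
    have hcastdiv : ((n / ∏ q ∈ S, q : ℕ) : ℂ) = (n : ℂ) / ((∏ q ∈ S, q : ℕ) : ℂ) :=
      Nat.cast_div hdvd (Nat.cast_ne_zero.mpr hdne)
    rw [hprodval, hmoeb, hcard, hcastdiv]
    rw [div_pow, Nat.cast_prod, ← Finset.prod_pow]
    have hneg : ∏ q ∈ S, -(1 / (q : ℂ) ^ k) = (-1 : ℂ) ^ S.card / ∏ q ∈ S, (q : ℂ) ^ k := by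
      rw [← Finset.prod_const, ← Finset.prod_div_distrib]
      exact Finset.prod_congr rfl fun q _ => by ring
    rw [hneg]
    ring
  rw [Finset.sum_congr rfl hterm, ← Finset.mul_sum,
    key_powerset_sum (fun q => -(1 / (q : ℂ) ^ k)) P, jordanTotient, ← hP, mul_assoc]
  congr 1
  rw [Finset.mul_sum]
  refine Finset.sum_congr rfl fun p hp => ?_
  have hpprime := hPprime p hp
  have hp0 : ((p : ℂ)) ^ k ≠ 0 := pow_ne_zero _ (Nat.cast_ne_zero.mpr hpprime.ne_zero)
  have hp1 : ((p : ℂ)) ^ k ≠ 1 := by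
    rw [show ((p : ℂ)) ^ k = ((p ^ k : ℕ) : ℂ) by push_cast; ring]
    intro h
    have : (p : ℕ) ^ k = 1 := Nat.cast_injective (by rw [h]; norm_num)
    exact absurd (Nat.one_lt_pow hk.ne' hpprime.one_lt) (by omega)
  have hprod : ∏ q ∈ P, (1 - 1 / (q : ℂ) ^ k)
      = (1 - 1 / (p : ℂ) ^ k) * ∏ q ∈ P.erase p, (1 - 1 / (q : ℂ) ^ k) :=
    (Finset.mul_prod_erase P _ hp).symm
  rw [hprod]
  have hperase : ∏ q ∈ P.erase p, (1 + -(1 / (q : ℂ) ^ k))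
      = ∏ q ∈ P.erase p, (1 - 1 / (q : ℂ) ^ k) := by
    refine Finset.prod_congr rfl fun q _ => by ring
  rw [hperase]
  have h1x : (1 : ℂ) - (p : ℂ) ^ k ≠ 0 := sub_ne_zero.mpr (Ne.symm hp1)
  have hkey : -(1 / (p : ℂ) ^ k) = (1 - 1 / (p : ℂ) ^ k) * (1 / (1 - (p : ℂ) ^ k)) := by
    field_simp
    ring
  rw [hkey]
  ring
end

section
/- Let f be a multiplicative arithmetic function with complex values and let s be a complex number. For each prime p set a_p = ∑_{m=1}^{∞} f(p^m)/p^{ms}, and assume a_p ≠ -1 for every prime p. Assume the series ∑_{n=1}^{∞} f(n)/n^s, ∑_p a_p/(1 + a_p) (over all primes p), and ∑_{n=1}^{∞} ω(n) f(n)/n^s all converge absolutely. Then ∑_{n=1}^{∞} ω(n) f(n)/n^s = (∑_{n=1}^{∞} f(n)/n^s) · (∑_p a_p/(1 + a_p)). -/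
open ArithmeticFunction

/-- The set of primes dividing `n`, as a finset of `Nat.Primes`. -/
noncomputable def primesFinset (n : ℕ) : Finset Nat.Primes :=
  n.primeFactors.attach.map
    ⟨fun q => (⟨q.1, Nat.prime_of_mem_primeFactors q.2⟩ : Nat.Primes),
      by
        intro a b h
        apply Subtype.ext
        have := congrArg (Subtype.val : Nat.Primes → ℕ) h
        simpa using this⟩

lemma mem_primesFinset {n : ℕ} {p : Nat.Primes} :
    p ∈ primesFinset n ↔ (p : ℕ) ∈ n.primeFactors := by
  simp only [primesFinset, Finset.mem_map, Finset.mem_attach, true_and,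
    Function.Embedding.coeFn_mk]
  constructor
  · rintro ⟨q, rfl⟩
    exact q.2
  · intro hp
    exact ⟨⟨(p : ℕ), hp⟩, Subtype.ext rfl⟩

lemma card_primesFinset (n : ℕ) : (primesFinset n).card = n.primeFactors.card := by
  simp [primesFinset]

/-- `∑_p [p ∣ n] c = ω(n) • c` for `n ≠ 0`. -/
lemma tsum_primes_indicator {M : Type*} [AddCommMonoid M] [TopologicalSpace M] [T2Space M]
    {n : ℕ} (hn : n ≠ 0) (c : M) :
    ∑' p : Nat.Primes, (if (p : ℕ) ∣ n then c else 0) = n.primeFactors.card • c := by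
  rw [tsum_eq_sum (s := primesFinset n) (fun p hp => by
    rw [if_neg]
    intro hdvd
    exact hp (mem_primesFinset.mpr (Nat.mem_primeFactors.mpr ⟨p.2, hdvd, hn⟩)))]
  rw [Finset.sum_congr rfl (fun p hp => if_pos
    (Nat.dvd_of_mem_primeFactors (mem_primesFinset.mp hp)))]
  rw [Finset.sum_const, card_primesFinset]

lemma summable_primes_indicator {M : Type*} [AddCommGroup M] [TopologicalSpace M]
    [IsTopologicalAddGroup M] {n : ℕ} (hn : n ≠ 0) (c : M) :
    Summable fun p : Nat.Primes => (if (p : ℕ) ∣ n then c else 0) :=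
  summable_of_ne_finset_zero (s := primesFinset n) (fun p hp => by
    rw [if_neg]
    intro hdvd
    exact hp (mem_primesFinset.mpr (Nat.mem_primeFactors.mpr ⟨p.2, hdvd, hn⟩)))

/-- Unique factorization `n = p^k * m` with `p ∤ m`, as an equivalence. -/
noncomputable def primeSplit (p : ℕ) (hp : p.Prime) :
    ℕ × {m : ℕ // ¬ p ∣ m} ≃ {n : ℕ // n ≠ 0} where
  toFun x := ⟨p ^ x.1 * x.2, by
    have h2 : (x.2 : ℕ) ≠ 0 := fun h => x.2.2 (h ▸ dvd_zero p)
    exact mul_ne_zero (pow_ne_zero _ hp.pos.ne') h2⟩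
  invFun n := ⟨(n : ℕ).factorization p,
    ⟨(n : ℕ) / p ^ ((n : ℕ).factorization p), Nat.not_dvd_ordCompl hp n.2⟩⟩
  left_inv := by
    rintro ⟨k, m, hm⟩
    have hm0 : m ≠ 0 := fun h => hm (h ▸ dvd_zero p)
    have hfact : (p ^ k * m).factorization p = k := by
      rw [Nat.factorization_mul (pow_ne_zero _ hp.pos.ne') hm0]
      simp [hp.factorization_pow, Nat.factorization_eq_zero_of_not_dvd hm]
    simp only [Prod.mk.injEq, Subtype.mk.injEq]
    refine ⟨hfact, ?_⟩
    rw [hfact]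
    exact Nat.mul_div_cancel_left m (pow_pos hp.pos k)
  right_inv := by
    rintro ⟨n, hn⟩
    exact Subtype.ext (Nat.ordProj_mul_ordCompl_eq_self n p)

/-- For a multiplicative arithmetic function `f`, `s ∈ ℂ`, and
`a_p = ∑_{m ≥ 1} f(p^m)/p^{ms}` with `a_p ≠ -1`, given absolute convergence of
`∑ f(n)/n^s`, `∑_p a_p/(1 + a_p)` and `∑ ω(n) f(n)/n^s`, we have
`∑ ω(n) f(n)/n^s = (∑ f(n)/n^s) · (∑_p a_p/(1 + a_p))`. -/
theorem stmt_12 (f : ArithmeticFunction ℂ) (hf : f.IsMultiplicative) (s : ℂ)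
    (a : Nat.Primes → ℂ)
    (ha : ∀ p : Nat.Primes,
      a p = ∑' m : ℕ, f ((p : ℕ) ^ (m + 1)) / ((p : ℕ) : ℂ) ^ (((m : ℂ) + 1) * s))
    (ha1 : ∀ p : Nat.Primes, a p ≠ -1)
    (h1 : Summable fun n : ℕ => ‖f n / (n : ℂ) ^ s‖)
    (h2 : Summable fun p : Nat.Primes => ‖a p / (1 + a p)‖)
    (h3 : Summable fun n : ℕ => ‖(n.primeFactors.card : ℂ) * f n / (n : ℂ) ^ s‖) :
    ∑' n : ℕ, (n.primeFactors.card : ℂ) * f n / (n : ℂ) ^ s =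
      (∑' n : ℕ, f n / (n : ℂ) ^ s) * ∑' p : Nat.Primes, a p / (1 + a p) := by
  set g : ℕ → ℂ := fun n => f n / (n : ℂ) ^ s with hgdef
  have hg0 : g 0 = 0 := by simp [hgdef]
  have hg1 : g 1 = 1 := by simp [hgdef, hf.map_one]
  have hgmul : ∀ m n : ℕ, Nat.Coprime m n → g (m * n) = g m * g n := by
    intro m n hmn
    rcases eq_or_ne m 0 with rfl | hm0
    · have : n = 1 := Nat.coprime_zero_left n |>.mp hmn
      simp [this, hg0, hg1]
    rcases eq_or_ne n 0 with rfl | hn0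
    · have : m = 1 := Nat.coprime_zero_right m |>.mp hmn
      simp [this, hg0, hg1]
    simp only [hgdef]
    rw [hf.map_mul_of_coprime hmn, Nat.cast_mul, Complex.natCast_mul_natCast_cpow,
      div_mul_div_comm]
  -- rewrite `a p` in terms of `g`
  have hgpow : ∀ (p : Nat.Primes) (k : ℕ),
      f ((p : ℕ) ^ (k + 1)) / ((p : ℕ) : ℂ) ^ (((k : ℂ) + 1) * s) = g ((p : ℕ) ^ (k + 1)) := by
    intro p k
    simp only [hgdef]
    congr 1
    have : ((k : ℂ) + 1) = ((k + 1 : ℕ) : ℂ) := by push_cast; ring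
    rw [this, Complex.natCast_cpow_natCast_mul, Nat.cast_pow]
  have ha' : ∀ p : Nat.Primes, a p = ∑' k : ℕ, g ((p : ℕ) ^ (k + 1)) := by
    intro p
    rw [ha p]
    exact tsum_congr fun k => hgpow p k
  have h1ap : ∀ p : Nat.Primes, (1 + a p) ≠ 0 := by
    intro p h
    exact ha1 p (by linear_combination h)
  have hgsum : Summable g := h1.of_norm
  set F : ℂ := ∑' n : ℕ, g n with hFdef
  -- indicator family
  set T : Nat.Primes → ℕ → ℂ := fun p n => if (p : ℕ) ∣ n then g n else 0 with hTdef
  -- per-prime computation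
  have key : ∀ p : Nat.Primes, ∑' n : ℕ, T p n = a p / (1 + a p) * F := by
    intro p
    have hp : (p : ℕ).Prime := p.2
    set e := primeSplit (p : ℕ) hp with hedef
    have hpowsum : Summable fun k : ℕ => ‖g ((p : ℕ) ^ k)‖ :=
      h1.comp_injective (Nat.pow_right_injective hp.two_le)
    have hmsum : Summable fun m : {m : ℕ // ¬ (p : ℕ) ∣ m} => ‖g m‖ := h1.subtype _
    set G : ℂ := ∑' m : {m : ℕ // ¬ (p : ℕ) ∣ m}, g m with hGdef
    -- F = (1 + a p) * G
    have hF : F = (1 + a p) * G := by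
      have hsupp : Function.support g ⊆ {n : ℕ | n ≠ 0} := by
        intro n hn
        simp only [Set.mem_setOf_eq]
        rintro rfl
        exact hn hg0
      have e1 : F = ∑' n : {n : ℕ // n ≠ 0}, g n :=
        (tsum_subtype_eq_of_support_subset hsupp).symm
      have e2 : (∑' n : {n : ℕ // n ≠ 0}, g n)
          = ∑' x : ℕ × {m : ℕ // ¬ (p : ℕ) ∣ m}, g ((p : ℕ) ^ x.1 * x.2) := by
        rw [← e.tsum_eq (fun n : {n : ℕ // n ≠ 0} => g n)]
        rfl
      have e3 : (∑' x : ℕ × {m : ℕ // ¬ (p : ℕ) ∣ m}, g ((p : ℕ) ^ x.1 * x.2))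
          = (∑' k : ℕ, g ((p : ℕ) ^ k)) * G := by
        have hco : ∀ (k : ℕ) (m : {m : ℕ // ¬ (p : ℕ) ∣ m}),
            g ((p : ℕ) ^ k * m) = g ((p : ℕ) ^ k) * g m := fun k m =>
          hgmul _ _ ((hp.coprime_iff_not_dvd.mpr m.2).pow_left _)
        calc (∑' x : ℕ × {m : ℕ // ¬ (p : ℕ) ∣ m}, g ((p : ℕ) ^ x.1 * x.2))
            = ∑' x : ℕ × {m : ℕ // ¬ (p : ℕ) ∣ m}, g ((p : ℕ) ^ x.1) * g x.2 :=
              tsum_congr fun x => hco x.1 x.2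
          _ = (∑' k : ℕ, g ((p : ℕ) ^ k)) * G :=
              (tsum_mul_tsum_of_summable_norm hpowsum hmsum).symm
      have e4 : (∑' k : ℕ, g ((p : ℕ) ^ k)) = 1 + a p := by
        rw [Summable.tsum_eq_zero_add (hpowsum.of_norm), pow_zero, hg1, ha' p]
      rw [e1, e2, e3, e4]
    -- ∑ T p = a p * G
    have hT : (∑' n : ℕ, T p n) = a p * G := by
      set u : ℕ → ℂ := fun k => if k = 0 then 0 else g ((p : ℕ) ^ k) with hudef
      have husum : Summable fun k : ℕ => ‖u k‖ := by
        apply Summable.of_nonneg_of_le (fun k => norm_nonneg _) _ hpowsum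
        intro k
        simp only [hudef]
        split <;> simp [norm_nonneg]
      have hsupp : Function.support (T p) ⊆ {n : ℕ | n ≠ 0} := by
        intro n hn
        simp only [Set.mem_setOf_eq]
        rintro rfl
        apply hn
        simp [hTdef, hg0]
      have e1 : (∑' n : ℕ, T p n) = ∑' n : {n : ℕ // n ≠ 0}, T p n :=
        (tsum_subtype_eq_of_support_subset hsupp).symm
      have e2 : (∑' n : {n : ℕ // n ≠ 0}, T p n)
          = ∑' x : ℕ × {m : ℕ // ¬ (p : ℕ) ∣ m}, u x.1 * g x.2 := by
        rw [← e.tsum_eq (fun n : {n : ℕ // n ≠ 0} => T p n)]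
        apply tsum_congr
        rintro ⟨k, m, hm⟩
        show T p ((p : ℕ) ^ k * m) = u k * g m
        rcases eq_or_ne k 0 with rfl | hk
        · simp [hTdef, hudef, hm]
        · have hdvd : (p : ℕ) ∣ (p : ℕ) ^ k * m :=
            Dvd.dvd.mul_right (dvd_pow_self _ hk) m
          have : g ((p : ℕ) ^ k * m) = g ((p : ℕ) ^ k) * g m :=
            hgmul _ _ ((hp.coprime_iff_not_dvd.mpr hm).pow_left _)
          simp [hTdef, hudef, hdvd, hk, this]
      have e3 : (∑' x : ℕ × {m : ℕ // ¬ (p : ℕ) ∣ m}, u x.1 * g x.2)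
          = (∑' k : ℕ, u k) * G :=
        (tsum_mul_tsum_of_summable_norm husum hmsum).symm
      have e4 : (∑' k : ℕ, u k) = a p := by
        rw [Summable.tsum_eq_zero_add (husum.of_norm)]
        simp only [hudef, if_pos rfl, zero_add, ha' p]
        exact tsum_congr fun k => by simp
      rw [e1, e2, e3, e4]
    rw [hT, hF, ← mul_assoc, div_mul_cancel₀ _ (h1ap p)]
  -- slice norms: ∑'_p ‖T p n‖ = ω n * ‖g n‖ for all n
  have hTnorm : ∀ n : ℕ, (∑' p : Nat.Primes, ‖T p n‖)
      = (n.primeFactors.card : ℝ) * ‖g n‖ := by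
    intro n
    have hTn : ∀ p : Nat.Primes, ‖T p n‖ = if (p : ℕ) ∣ n then ‖g n‖ else 0 := by
      intro p; simp only [hTdef]; split <;> simp
    rcases eq_or_ne n 0 with rfl | hn
    · simp [hTn, hg0]
    · rw [tsum_congr hTn, tsum_primes_indicator hn, nsmul_eq_mul]
  -- summability of the double family
  have hTsum : Summable (Function.uncurry fun n (p : Nat.Primes) => T p n) := by
    apply Summable.of_norm
    rw [summable_prod_of_nonneg (fun x => norm_nonneg _)]
    constructor
    · intro n
      rcases eq_or_ne n 0 with rfl | hn
      · have : ∀ p : Nat.Primes, ‖T p 0‖ = 0 := fun p => by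
          simp [hTdef, hg0]
        exact (summable_congr (fun p => (this p))).mpr summable_zero
      · apply Summable.of_norm
        have := summable_primes_indicator (M := ℝ) hn ‖g n‖
        apply (summable_congr (fun p : Nat.Primes => ?_)).mpr this
        simp only [Function.uncurry, hTdef]
        split <;> simp
    · refine h3.congr fun n => ?_
      calc ‖(n.primeFactors.card : ℂ) * f n / (n : ℂ) ^ s‖
          = (n.primeFactors.card : ℝ) * ‖g n‖ := by
            rw [mul_div_assoc, norm_mul, Complex.norm_natCast]
        _ = ∑' p : Nat.Primes, ‖T p n‖ := (hTnorm n).symm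
  -- the LHS as a double sum
  have hLHS : ∀ n : ℕ, (n.primeFactors.card : ℂ) * f n / (n : ℂ) ^ s
      = ∑' p : Nat.Primes, T p n := by
    intro n
    rcases eq_or_ne n 0 with rfl | hn
    · simp [hTdef, hg0]
    · have : ∀ p : Nat.Primes, T p n = if (p : ℕ) ∣ n then g n else 0 := fun p => rfl
      rw [tsum_congr this, tsum_primes_indicator hn, nsmul_eq_mul, mul_div_assoc]
  calc ∑' n : ℕ, (n.primeFactors.card : ℂ) * f n / (n : ℂ) ^ s
      = ∑' (n : ℕ) (p : Nat.Primes), T p n := tsum_congr hLHS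
    _ = ∑' (p : Nat.Primes) (n : ℕ), T p n := by
        exact (Summable.tsum_comm' hTsum (fun n => hTsum.prod_factor n)
          (fun p => hTsum.prod_symm.prod_factor p)).symm
    _ = ∑' p : Nat.Primes, a p / (1 + a p) * F := tsum_congr key
    _ = (∑' p : Nat.Primes, a p / (1 + a p)) * F := tsum_mul_right
    _ = F * ∑' p : Nat.Primes, a p / (1 + a p) := mul_comm _ _
end

section
/- Let f be a multiplicative arithmetic function with complex values and let s be a complex number. Assume f(p) ≠ -p^s for every prime p, and assume the series ∑_{n=1}^{∞} |μ(n)| f(n)/n^s, ∑_p f(p)/(p^s + f(p)) (over all primes p), and ∑_{n=1}^{∞} |μ(n)| ω(n) f(n)/n^s all converge absolutely. Then ∑_{n=1}^{∞} |μ(n)| ω(n) f(n)/n^s = (∑_{n=1}^{∞} |μ(n)| f(n)/n^s) · (∑_p f(p)/(p^s + f(p))). -/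
open ArithmeticFunction

private lemma prime_ind_tsum {M : Type*} [AddCommMonoid M] [TopologicalSpace M] [T2Space M]
    (n : ℕ) (hn : n ≠ 0) (x : M) :
    ∑' p : Nat.Primes, (if (p : ℕ) ∣ n then x else 0) = (n.primeFactors.card : ℕ) • x := by
  classical
  have hs : ∀ p : Nat.Primes, p ∉ n.primeFactors.subtype Nat.Prime →
      (if (p : ℕ) ∣ n then x else 0) = 0 := by
    intro p hp
    replace hp : (p : ℕ) ∉ n.primeFactors := fun h => hp (Finset.mem_subtype.2 h)
    rw [if_neg]
    intro hdvd
    exact hp (Nat.mem_primeFactors.2 ⟨p.2, hdvd, hn⟩)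
  rw [tsum_eq_sum hs]
  have hcard : (n.primeFactors.subtype Nat.Prime).card = n.primeFactors.card := by
    rw [Finset.card_subtype, Finset.filter_true_of_mem]
    intro q hq; exact Nat.prime_of_mem_primeFactors hq
  rw [← hcard, ← Finset.sum_const]
  apply Finset.sum_congr rfl
  intro p hp
  replace hp : (p : ℕ) ∈ n.primeFactors := Finset.mem_subtype.1 hp
  rw [if_pos (Nat.dvd_of_mem_primeFactors hp)]

private lemma prime_ind_summable {M : Type*} [AddCommMonoid M] [TopologicalSpace M]
    (n : ℕ) (hn : n ≠ 0) (x : M) :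
    Summable (fun p : Nat.Primes => if (p : ℕ) ∣ n then x else 0) := by
  classical
  refine summable_of_ne_finset_zero (s := (n.primeFactors.subtype Nat.Prime : Finset Nat.Primes)) ?_
  intro p hp
  replace hp : (p : ℕ) ∉ n.primeFactors := fun h => hp (Finset.mem_subtype.2 h)
  rw [if_neg]
  intro hdvd
  exact hp (Nat.mem_primeFactors.2 ⟨p.2, hdvd, hn⟩)

/-- For a multiplicative arithmetic function `f` and `s ∈ ℂ` with
`f p ≠ -p^s` for every prime `p`, given absolute convergence of `∑ |μ(n)| f(n)/n^s`,
`∑_p f(p)/(p^s + f(p))` and `∑ |μ(n)| ω(n) f(n)/n^s`, we have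
`∑ |μ(n)| ω(n) f(n)/n^s = (∑ |μ(n)| f(n)/n^s) · (∑_p f(p)/(p^s + f(p)))`. -/
theorem stmt_14 (f : ArithmeticFunction ℂ) (hf : f.IsMultiplicative) (s : ℂ)
    (hfp : ∀ p : Nat.Primes, f (p : ℕ) ≠ -(((p : ℕ) : ℂ) ^ s))
    (h1 : Summable fun n : ℕ => ‖((moebius n).natAbs : ℂ) * f n / (n : ℂ) ^ s‖)
    (h2 : Summable fun p : Nat.Primes => ‖f (p : ℕ) / (((p : ℕ) : ℂ) ^ s + f (p : ℕ))‖)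
    (h3 : Summable fun n : ℕ =>
      ‖((moebius n).natAbs : ℂ) * (n.primeFactors.card : ℂ) * f n / (n : ℂ) ^ s‖) :
    ∑' n : ℕ, ((moebius n).natAbs : ℂ) * (n.primeFactors.card : ℂ) * f n / (n : ℂ) ^ s =
      (∑' n : ℕ, ((moebius n).natAbs : ℂ) * f n / (n : ℂ) ^ s) *
        ∑' p : Nat.Primes, f (p : ℕ) / (((p : ℕ) : ℂ) ^ s + f (p : ℕ)) := by
  classical
  set a : ℕ → ℂ := fun n => ((moebius n).natAbs : ℂ) * f n / (n : ℂ) ^ s with ha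
  have ha0 : a 0 = 0 := by simp [ha]
  have hsuma : Summable a := h1.of_norm
  have hps : ∀ p : Nat.Primes, ((p : ℕ) : ℂ) ^ s ≠ 0 := by
    intro p
    rw [Ne, Complex.cpow_eq_zero_iff, not_and_or]
    left
    exact_mod_cast p.2.pos.ne'
  have hden : ∀ p : Nat.Primes, ((p : ℕ) : ℂ) ^ s + f (p : ℕ) ≠ 0 := by
    intro p h
    exact hfp p (by linear_combination h)
  -- key multiplicative identity
  have key : ∀ (p : Nat.Primes) (m : ℕ), a ((p : ℕ) * m) =
      if (p : ℕ) ∣ m then 0 else (f (p : ℕ) / ((p : ℕ) : ℂ) ^ s) * a m := by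
    intro p m
    by_cases hpm : (p : ℕ) ∣ m
    · rw [if_pos hpm]
      have hnsq : ¬ Squarefree ((p : ℕ) * m) := by
        intro hsq
        exact p.2.not_isUnit (hsq (p : ℕ) (mul_dvd_mul_left _ hpm))
      simp [ha, moebius_eq_zero_of_not_squarefree hnsq]
    · rw [if_neg hpm]
      have hm0 : m ≠ 0 := by rintro rfl; exact hpm (dvd_zero _)
      have hcop : Nat.Coprime (p : ℕ) m := (Nat.Prime.coprime_iff_not_dvd p.2).2 hpm
      have hmu : moebius ((p : ℕ) * m) = moebius (p : ℕ) * moebius m :=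
        isMultiplicative_moebius.map_mul_of_coprime hcop
      have hfm : f ((p : ℕ) * m) = f (p : ℕ) * f m := hf.map_mul_of_coprime hcop
      have hpow : ((((p : ℕ) * m : ℕ)) : ℂ) ^ s = ((p : ℕ) : ℂ) ^ s * ((m : ℕ) : ℂ) ^ s := by
        have := Complex.mul_cpow_ofReal_nonneg (a := ((p : ℕ) : ℝ)) (b := (m : ℝ))
          (Nat.cast_nonneg _) (Nat.cast_nonneg _) s
        push_cast at this ⊢
        exact this
      have hms : ((m : ℕ) : ℂ) ^ s ≠ 0 := by
        rw [Ne, Complex.cpow_eq_zero_iff, not_and_or]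
        left
        exact_mod_cast hm0
      rw [ha]
      simp only
      rw [hmu, hfm, hpow, moebius_apply_prime p.2]
      rw [Int.natAbs_mul]
      push_cast [Int.natAbs_neg]
      field_simp
  -- the double indexed family
  set b : ℕ → Nat.Primes → ℂ := fun n p => if (p : ℕ) ∣ n then a n else 0 with hb
  have hbnorm : ∀ n p, ‖b n p‖ = if (p : ℕ) ∣ n then ‖a n‖ else 0 := by
    intro n p
    by_cases h : (p : ℕ) ∣ n <;> simp [hb, h]
  have homega : ∀ n : ℕ, ‖((moebius n).natAbs : ℂ) * (n.primeFactors.card : ℂ) * f n / (n : ℂ) ^ s‖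
      = (n.primeFactors.card : ℕ) • ‖a n‖ := by
    intro n
    rw [ha]
    simp only [norm_div, norm_mul, Complex.norm_natCast, nsmul_eq_mul]
    ring
  have hBsum : Summable (Function.uncurry b) := by
    apply Summable.of_norm
    rw [summable_prod_of_nonneg (fun x => norm_nonneg _)]
    constructor
    · intro n
      by_cases hn : n = 0
      · subst hn
        apply Summable.congr (summable_zero : Summable fun _ : Nat.Primes => (0 : ℝ))
        intro p
        simp [Function.uncurry, hbnorm, ha0]
      · exact Summable.congr (prime_ind_summable n hn ‖a n‖) (fun p => (hbnorm n p).symm)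
    · apply Summable.congr h3
      intro n
      by_cases hn : n = 0
      · subst hn
        simp [Function.uncurry, hbnorm, ha0]
      · rw [homega n, ← prime_ind_tsum n hn ‖a n‖]
        apply tsum_congr
        intro p
        exact (hbnorm n p).symm
  -- LHS = ∑' n, ∑' p, b n p
  have step1 : (∑' n : ℕ, ((moebius n).natAbs : ℂ) * (n.primeFactors.card : ℂ) * f n / (n : ℂ) ^ s)
      = ∑' (n : ℕ) (p : Nat.Primes), b n p := by
    apply tsum_congr
    intro n
    by_cases hn : n = 0
    · subst hn
      simp [hb, ha0]
    · rw [show (∑' p : Nat.Primes, b n p) = (n.primeFactors.card : ℕ) • a n from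
        prime_ind_tsum n hn (a n), ha]
      simp only [nsmul_eq_mul]
      push_cast
      ring
  -- swap the order of summation
  have step2 : (∑' (n : ℕ) (p : Nat.Primes), b n p) = ∑' (p : Nat.Primes) (n : ℕ), b n p :=
    (hBsum.tsum_comm).symm
  -- the inner sums T p
  have hindsum : ∀ p : Nat.Primes, Summable (fun n => b n p) := by
    intro p
    have : Summable ({n : ℕ | (p : ℕ) ∣ n}.indicator a) := hsuma.indicator _
    apply this.congr
    intro n
    by_cases h : (p : ℕ) ∣ n <;> simp [hb, h, Set.indicator_apply]
  have hTval : ∀ p : Nat.Primes, (∑' n : ℕ, b n p)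
      = (∑' n : ℕ, a n) * (f (p : ℕ) / (((p : ℕ) : ℂ) ^ s + f (p : ℕ))) := by
    intro p
    set T := ∑' n : ℕ, b n p with hTdef
    set A := ∑' n : ℕ, a n with hA
    have hinj : Function.Injective (fun m : ℕ => (p : ℕ) * m) := by
      intro x y h
      exact Nat.eq_of_mul_eq_mul_left p.2.pos h
    have hsupp : Function.support (fun n => b n p) ⊆ Set.range (fun m : ℕ => (p : ℕ) * m) := by
      intro n hn
      rw [Function.mem_support] at hn
      have hdvd : (p : ℕ) ∣ n := by
        by_contra h
        exact hn (by simp [hb, h])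
      obtain ⟨m, rfl⟩ := hdvd
      exact ⟨m, rfl⟩
    have hre : T = ∑' m : ℕ, b ((p : ℕ) * m) p := (hinj.tsum_eq hsupp).symm
    have hval : ∀ m : ℕ, b ((p : ℕ) * m) p
        = (f (p : ℕ) / ((p : ℕ) : ℂ) ^ s) * (a m - b m p) := by
      intro m
      have hdvd : (p : ℕ) ∣ (p : ℕ) * m := Dvd.intro m rfl
      rw [show b ((p : ℕ) * m) p = a ((p : ℕ) * m) from if_pos hdvd, key p m]
      by_cases h : (p : ℕ) ∣ m
      · rw [if_pos h, show b m p = a m from if_pos h]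
        ring
      · rw [if_neg h, show b m p = 0 from if_neg h]
        ring
    have hTeq : T = (f (p : ℕ) / ((p : ℕ) : ℂ) ^ s) * (A - T) :=
      calc T = ∑' m : ℕ, b ((p : ℕ) * m) p := hre
        _ = ∑' m : ℕ, (f (p : ℕ) / ((p : ℕ) : ℂ) ^ s) * (a m - b m p) := tsum_congr hval
        _ = (f (p : ℕ) / ((p : ℕ) : ℂ) ^ s) * ∑' m : ℕ, (a m - b m p) := tsum_mul_left
        _ = (f (p : ℕ) / ((p : ℕ) : ℂ) ^ s) * (A - T) := by
            rw [hsuma.tsum_sub (hindsum p)]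
    have hps' := hps p
    have hden' := hden p
    have hTps : T * (((p : ℕ) : ℂ) ^ s + f (p : ℕ)) = f (p : ℕ) * A := by
      have e := hTeq
      field_simp [hps'] at e
      linear_combination e
    rw [← mul_div_assoc, eq_div_iff hden']
    linear_combination hTps
  -- put everything together
  calc (∑' n : ℕ, ((moebius n).natAbs : ℂ) * (n.primeFactors.card : ℂ) * f n / (n : ℂ) ^ s)
      = ∑' (n : ℕ) (p : Nat.Primes), b n p := step1
    _ = ∑' (p : Nat.Primes) (n : ℕ), b n p := step2
    _ = ∑' p : Nat.Primes, (∑' n : ℕ, a n) * (f (p : ℕ) / (((p : ℕ) : ℂ) ^ s + f (p : ℕ))) :=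
        tsum_congr hTval
    _ = (∑' n : ℕ, a n) * ∑' p : Nat.Primes, f (p : ℕ) / (((p : ℕ) : ℂ) ^ s + f (p : ℕ)) :=
        tsum_mul_left
end

section
/- Let s be a complex number with Re(s) > 1. Then ∑_{n=1}^{∞} |μ(n)| ω(n)/n^s = (ζ(s)/ζ(2s)) · P(s,1), where ζ is the Riemann zeta function and P(s,1) = ∑_p 1/(p^s + 1) is the shifted prime zeta function (the sum running over all primes p). -/
open ArithmeticFunction

namespace Stmt19
open Complex LSeries
open scoped LSeries.notation
open scoped ArithmeticFunction.zeta ArithmeticFunction.Moebius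

noncomputable section

/-- `|μ|` as a `ℂ`-valued arithmetic function. -/
def Fmu : ArithmeticFunction ℂ := ⟨fun n => ((moebius n).natAbs : ℂ), by simp⟩

/-- indicator of positive squares -/
def Gsq : ArithmeticFunction ℂ := ⟨fun n => if IsSquare n ∧ n ≠ 0 then 1 else 0, by simp⟩

lemma Fmu_apply (n : ℕ) : Fmu n = ((moebius n).natAbs : ℂ) := rfl

lemma Fmu_mult : Fmu.IsMultiplicative := by
  constructor
  · simp [Fmu]
  · intro m n h
    simp only [Fmu_apply]
    rw [isMultiplicative_moebius.map_mul_of_coprime h, Int.natAbs_mul]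
    push_cast
    ring

lemma even_factorization_of_isSquare {n p : ℕ} (h : IsSquare n) : Even (n.factorization p) := by
  obtain ⟨r, rfl⟩ := h
  rcases eq_or_ne r 0 with rfl | hr
  · simp
  · rw [Nat.factorization_mul hr hr]
    exact ⟨r.factorization p, by simp⟩

lemma isSquare_of_even_factorization {n : ℕ} (hn : n ≠ 0)
    (h : ∀ p, Even (n.factorization p)) : IsSquare n := by
  refine ⟨n.factorization.prod fun p k => p ^ (k / 2), ?_⟩
  rw [Finsupp.prod, ← Finset.prod_mul_distrib]
  conv_lhs => rw [← Nat.factorization_prod_pow_eq_self hn]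
  rw [Finsupp.prod]
  refine Finset.prod_congr rfl fun p _ => ?_
  rw [← pow_add]
  congr 1
  obtain ⟨c, hc⟩ := h p
  omega

lemma isSquare_prime_pow_iff {p k : ℕ} (hp : p.Prime) : IsSquare (p ^ k) ↔ Even k := by
  constructor
  · intro h
    have := even_factorization_of_isSquare (p := p) h
    rwa [Nat.Prime.factorization_pow hp, Finsupp.single_eq_same] at this
  · rintro ⟨c, hc⟩
    exact ⟨p ^ c, by rw [hc, pow_add]⟩

lemma isSquare_left_of_coprime {m n : ℕ} (h : m.Coprime n) (hmn : IsSquare (m * n)) :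
    IsSquare m := by
  rcases eq_or_ne m 0 with rfl | hm
  · exact ⟨0, rfl⟩
  rcases eq_or_ne n 0 with rfl | hn
  · have hm1 : m = 1 := by simpa [Nat.coprime_zero_right] using h
    simp [hm1]
  apply isSquare_of_even_factorization hm
  intro p
  by_cases hpm : m.factorization p = 0
  · simp [hpm]
  · have hpn : n.factorization p = 0 := by
      by_contra hpn
      have h1 : p ∣ m := Nat.dvd_of_factorization_pos hpm
      have h2 : p ∣ n := Nat.dvd_of_factorization_pos hpn
      have hp1 : p = 1 := Nat.eq_one_of_dvd_one (h ▸ Nat.dvd_gcd h1 h2)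
      exact hpm (by simp [hp1])
    have key : (m * n).factorization p = m.factorization p := by
      rw [Nat.factorization_mul hm hn]
      simp [hpn]
    rw [← key]
    exact even_factorization_of_isSquare hmn

lemma Gsq_apply (n : ℕ) : Gsq n = if IsSquare n ∧ n ≠ 0 then 1 else 0 := rfl

lemma Gsq_mult : Gsq.IsMultiplicative := by
  constructor
  · simp [Gsq_apply]
  · intro m n h
    simp only [Gsq_apply]
    by_cases hm : IsSquare m ∧ m ≠ 0
    · by_cases hn : IsSquare n ∧ n ≠ 0
      · rw [if_pos ⟨hm.1.mul hn.1, mul_ne_zero hm.2 hn.2⟩, if_pos hm, if_pos hn, mul_one]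
      · rw [if_neg, if_pos hm, if_neg hn, mul_zero]
        rintro ⟨hsq, hne⟩
        exact hn ⟨isSquare_left_of_coprime h.symm (mul_comm m n ▸ hsq),
          fun h0 => hne (by simp [h0])⟩
    · rw [if_neg, if_neg hm, zero_mul]
      rintro ⟨hsq, hne⟩
      exact hm ⟨isSquare_left_of_coprime h hsq, fun h0 => hne (by simp [h0])⟩

lemma Gsq_prime_pow {p : ℕ} (hp : p.Prime) (i : ℕ) :
    Gsq (p ^ i) = if Even i then 1 else 0 := by
  rw [Gsq_apply]
  by_cases h : Even i
  · rw [if_pos ⟨(isSquare_prime_pow_iff hp).2 h, pow_ne_zero _ hp.ne_zero⟩, if_pos h]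
  · rw [if_neg, if_neg h]
    rintro ⟨hsq, -⟩
    exact h ((isSquare_prime_pow_iff hp).1 hsq)

lemma Fmu_mul_Gsq : Fmu * Gsq = (ζ : ArithmeticFunction ℂ) := by
  rw [ArithmeticFunction.IsMultiplicative.eq_iff_eq_on_prime_powers _ (Fmu_mult.mul Gsq_mult) _
    isMultiplicative_zeta.natCast]
  intro p k hp
  rw [ArithmeticFunction.mul_apply, Nat.sum_divisorsAntidiagonal (f := fun a b => Fmu a * Gsq b),
    Nat.sum_divisors_prime_pow hp]
  have hz : ((ζ : ArithmeticFunction ℂ)) (p ^ k) = 1 := by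
    simp [natCoe_apply, ArithmeticFunction.zeta_apply, pow_ne_zero _ hp.ne_zero, hp.ne_zero]
  rw [hz]
  have hdiv : ∀ j ∈ Finset.range (k + 1), Fmu (p ^ j) * Gsq (p ^ k / p ^ j)
      = Fmu (p ^ j) * Gsq (p ^ (k - j)) := by
    intro j hj
    rw [Nat.pow_div (Nat.lt_succ_iff.mp (Finset.mem_range.mp hj)) hp.pos]
  rw [Finset.sum_congr rfl hdiv]
  rcases Nat.eq_zero_or_pos k with rfl | hk
  · simp [Fmu_apply, Gsq_apply]
  · have hsub : ({0, 1} : Finset ℕ) ⊆ Finset.range (k + 1) := by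
      intro x hx
      fin_cases hx <;> simp <;> omega
    rw [← Finset.sum_subset hsub]
    · rw [Finset.sum_insert (by simp), Finset.sum_singleton]
      have f0 : Fmu (p ^ 0) = 1 := by simp [Fmu_apply]
      have f1 : Fmu (p ^ 1) = 1 := by
        simp [Fmu_apply, pow_one, moebius_apply_prime hp]
      rw [f0, f1, one_mul, one_mul, Gsq_prime_pow hp, Gsq_prime_pow hp, Nat.sub_zero]
      rcases Nat.even_or_odd k with he | ho
      · rw [if_pos he, if_neg (by rw [Nat.even_sub hk]; simp [he])]
        norm_num
      · rw [if_neg (Nat.not_even_iff_odd.2 ho),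
          if_pos (by rw [Nat.even_sub hk]; simp [Nat.not_even_iff_odd.2 ho])]
        norm_num
    · intro j hj hj2
      have hj3 : 2 ≤ j := by
        simp only [Finset.mem_insert, Finset.mem_singleton] at hj2
        omega
      have : moebius (p ^ j) = 0 := by
        rw [moebius_apply_prime_pow hp (by omega), if_neg (by omega)]
      simp [Fmu_apply, this]

lemma natAbs_moebius_le_one (n : ℕ) : (moebius n).natAbs ≤ 1 := by
  by_cases h : Squarefree n
  · rw [moebius_apply_of_squarefree h]
    simp [Int.natAbs_pow]
  · simp [moebius_eq_zero_of_not_squarefree h]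

lemma hFsummable {s : ℂ} (hs : 1 < s.re) : LSeriesSummable ↗Fmu s := by
  apply LSeriesSummable_of_bounded_of_one_lt_re (m := 1) _ hs
  intro n _
  simp only [Fmu_apply, Complex.norm_natCast]
  have := natAbs_moebius_le_one n
  calc ((μ n).natAbs : ℝ) = ((μ n).natAbs : ℝ) := by
        rfl
    _ ≤ 1 := by exact_mod_cast this

lemma hGsummable {s : ℂ} (hs : 1 < s.re) : LSeriesSummable ↗Gsq s := by
  apply LSeriesSummable_of_bounded_of_one_lt_re (m := 1) _ hs
  intro n _
  rw [Gsq_apply]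
  split <;> simp

lemma two_s_re {s : ℂ} (hs : 1 < s.re) : 1 < (2 * s).re := by
  simp only [Complex.mul_re, Complex.re_ofNat, Complex.im_ofNat, zero_mul, sub_zero]
  linarith

lemma natCast_sq_cpow (m : ℕ) (s : ℂ) : ((m ^ 2 : ℕ) : ℂ) ^ s = (m : ℂ) ^ (2 * s) := by
  have h0 : (0:ℝ) ≤ (m:ℝ) := Nat.cast_nonneg m
  have h1 : ((m ^ 2 : ℕ) : ℂ) = ((m:ℝ):ℂ) * ((m:ℝ):ℂ) := by push_cast; ring
  rw [h1, Complex.mul_cpow_ofReal_nonneg h0 h0]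
  have h2 : (2 : ℂ) * s = ((2:ℕ) : ℂ) * s := by norm_num
  rw [h2, Complex.cpow_nat_mul]
  push_cast
  ring

lemma LSeries_Gsq {s : ℂ} (hs : 1 < s.re) : LSeries ↗Gsq s = riemannZeta (2 * s) := by
  rw [← LSeries_zeta_eq_riemannZeta (two_s_re hs), LSeries, LSeries]
  have hinj : Function.Injective (fun m : ℕ => m ^ 2) :=
    fun a b h => Nat.pow_left_injective (by norm_num) h
  rw [← Function.Injective.tsum_eq hinj (f := fun n => term ↗Gsq s n) ?side]
  case side =>
    intro n hn
    rw [Function.mem_support] at hn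
    have hn0 : n ≠ 0 := by
      rintro rfl
      exact hn (term_zero _ _)
    rw [term_of_ne_zero hn0] at hn
    have : Gsq n ≠ 0 := by
      intro h
      apply hn
      simp only [h, zero_div]
    rw [Gsq_apply] at this
    have hsq : IsSquare n := by
      by_contra hc
      exact this (if_neg (fun hh => hc hh.1))
    obtain ⟨r, rfl⟩ := hsq
    exact ⟨r, by simpa [sq] using (sq r).symm⟩
  apply tsum_congr
  intro m
  rcases eq_or_ne m 0 with rfl | hm
  · simp [term]
  · rw [term_of_ne_zero (pow_ne_zero 2 hm), term_of_ne_zero hm]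
    have hG : Gsq (m ^ 2) = 1 := by
      rw [Gsq_apply, if_pos ⟨⟨m, sq m⟩, pow_ne_zero 2 hm⟩]
    have hZ : ((ζ : ArithmeticFunction ℕ) m : ℂ) = 1 := by
      simp [ArithmeticFunction.zeta_apply, hm]
    show (Gsq (m ^ 2) : ℂ) / _ = ((ζ : ArithmeticFunction ℕ) m : ℂ) / _
    rw [hG, hZ, natCast_sq_cpow]

lemma LSeries_Fmu {s : ℂ} (hs : 1 < s.re) :
    LSeries ↗Fmu s = riemannZeta s / riemannZeta (2 * s) := by
  have hmul := LSeries_mul' (hFsummable hs) (hGsummable hs)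
  rw [Fmu_mul_Gsq] at hmul
  have hcoe : ↗((ζ : ArithmeticFunction ℕ) : ArithmeticFunction ℂ)
      = ↗(ζ : ArithmeticFunction ℕ) := by
    funext n
    simp [natCoe_apply]
  rw [hcoe, LSeries_zeta_eq_riemannZeta hs, LSeries_Gsq hs] at hmul
  have hz2 : riemannZeta (2 * s) ≠ 0 := riemannZeta_ne_zero_of_one_lt_re (two_s_re hs)
  field_simp [hmul]
  exact hmul.symm

lemma p_cpow_ne_zero {s : ℂ} (p : Nat.Primes) : ((p : ℕ) : ℂ) ^ s ≠ 0 := by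
  intro h
  rcases (Complex.cpow_eq_zero_iff _ _).mp h with ⟨h0, -⟩
  exact Nat.cast_ne_zero.mpr p.2.ne_zero h0

lemma one_lt_norm_p_cpow {s : ℂ} (hs : 1 < s.re) (p : Nat.Primes) :
    1 < ‖((p : ℕ) : ℂ) ^ s‖ := by
  rw [Complex.norm_natCast_cpow_of_pos p.2.pos]
  have h2 : (2 : ℝ) ≤ (p : ℕ) := by exact_mod_cast p.2.two_le
  rw [Real.one_lt_rpow_iff_of_pos (by exact_mod_cast p.2.pos)]
  left
  refine ⟨by exact_mod_cast p.2.one_lt, by linarith⟩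

lemma p_cpow_add_one_ne_zero {s : ℂ} (hs : 1 < s.re) (p : Nat.Primes) :
    ((p : ℕ) : ℂ) ^ s + 1 ≠ 0 := by
  intro h
  have h1 : ((p : ℕ) : ℂ) ^ s = -1 := by linear_combination h
  have := one_lt_norm_p_cpow hs p
  rw [h1] at this
  simp at this

lemma tsum_if_dvd {M : Type*} [AddCommGroup M] [UniformSpace M] [T2Space M] (f : ℕ → M)
    {p : ℕ} (hp : p ≠ 0) :
    ∑' n : ℕ, (if p ∣ n then f n else 0) = ∑' m : ℕ, f (p * m) := by
  rw [← Function.Injective.tsum_eq (mul_right_injective₀ hp)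
    (f := fun n => if p ∣ n then f n else 0) ?side]
  · exact tsum_congr fun m => if_pos ⟨m, rfl⟩
  case side =>
    intro n hn
    rw [Function.mem_support] at hn
    have hd : p ∣ n := by
      by_contra hd
      exact hn (if_neg hd)
    obtain ⟨m, rfl⟩ := hd
    exact ⟨m, rfl⟩

lemma natCast_mul_cpow (a b : ℕ) (s : ℂ) :
    ((a * b : ℕ) : ℂ) ^ s = ((a : ℕ) : ℂ) ^ s * ((b : ℕ) : ℂ) ^ s := by
  have h := Complex.mul_cpow_ofReal_nonneg (Nat.cast_nonneg a) (Nat.cast_nonneg b) s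
  push_cast at h ⊢
  exact h

lemma natAbs_moebius_mul_le (p m : ℕ) : (moebius (p * m)).natAbs ≤ (moebius m).natAbs := by
  by_cases h : Squarefree (p * m)
  · have hm : Squarefree m := h.squarefree_of_dvd (Dvd.intro_left p rfl)
    rw [moebius_apply_of_squarefree h, moebius_apply_of_squarefree hm]
    simp [Int.natAbs_pow]
  · simp [moebius_eq_zero_of_not_squarefree h]

lemma term_Fmu_p_mul (s : ℂ) (p : Nat.Primes) (m : ℕ) :
    term ↗Fmu s ((p : ℕ) * m)
      = (1 / ((p : ℕ) : ℂ) ^ s) *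
          (term ↗Fmu s m - if (p : ℕ) ∣ m then term ↗Fmu s m else 0) := by
  rcases eq_or_ne m 0 with rfl | hm
  · simp [term]
  by_cases hd : (p : ℕ) ∣ m
  · rw [if_pos hd, sub_self, mul_zero]
    obtain ⟨k, rfl⟩ := hd
    rw [term_of_ne_zero (mul_ne_zero p.2.ne_zero hm)]
    have hns : ¬ Squarefree ((p : ℕ) * ((p : ℕ) * k)) := by
      intro h
      exact p.2.prime.not_unit (h (p : ℕ) ⟨k, by ring⟩)
    show ((moebius _).natAbs : ℂ) / _ = 0
    rw [moebius_eq_zero_of_not_squarefree hns]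
    simp
  · rw [if_neg hd, term_of_ne_zero (mul_ne_zero p.2.ne_zero hm), term_of_ne_zero hm]
    have hcop : Nat.Coprime (p : ℕ) m := (p.2.coprime_iff_not_dvd).mpr hd
    show (Fmu ((p : ℕ) * m) : ℂ) / _ = _ * ((Fmu m : ℂ) / _ - _)
    rw [Fmu_mult.map_mul_of_coprime hcop, natCast_mul_cpow]
    have hFp : Fmu (p : ℕ) = 1 := by
      rw [Fmu_apply, moebius_apply_prime p.2]
      norm_num
    rw [hFp, one_mul, sub_zero]
    ring

lemma summable_if_dvd {s : ℂ} (hs : 1 < s.re) (p : Nat.Primes) :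
    Summable fun n : ℕ => if (p : ℕ) ∣ n then term ↗Fmu s n else 0 := by
  apply Summable.of_norm
  apply Summable.of_nonneg_of_le (fun n => norm_nonneg _) _ (hFsummable hs).norm
  intro n
  split
  · exact le_refl _
  · simp

lemma Sp_eq {s : ℂ} (hs : 1 < s.re) (p : Nat.Primes) :
    ∑' n : ℕ, (if (p : ℕ) ∣ n then term ↗Fmu s n else 0)
      = LSeries ↗Fmu s / (((p : ℕ) : ℂ) ^ s + 1) := by
  have hp0 : (p : ℕ) ≠ 0 := p.2.ne_zero
  have key : (∑' n : ℕ, if (p : ℕ) ∣ n then term ↗Fmu s n else 0)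
      = (1 / ((p : ℕ) : ℂ) ^ s) *
          (LSeries ↗Fmu s - ∑' n : ℕ, if (p : ℕ) ∣ n then term ↗Fmu s n else 0) := by
    conv_lhs => rw [tsum_if_dvd _ hp0]
    rw [tsum_congr (term_Fmu_p_mul s p), tsum_mul_left,
      Summable.tsum_sub (hFsummable hs) (summable_if_dvd hs p)]
    rfl
  have hz : ((p : ℕ) : ℂ) ^ s ≠ 0 := p_cpow_ne_zero p
  have hz1 : ((p : ℕ) : ℂ) ^ s + 1 ≠ 0 := p_cpow_add_one_ne_zero hs p
  rw [eq_div_iff hz1]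
  field_simp at key
  linear_combination key

lemma point {s : ℂ} (hs : 1 < s.re) (n : ℕ) :
    ((moebius n).natAbs : ℂ) * (n.primeFactors.card : ℂ) / (n : ℂ) ^ s
      = ∑' p : Nat.Primes, (if (p : ℕ) ∣ n then term ↗Fmu s n else 0) := by
  rcases eq_or_ne n 0 with rfl | hn
  · simp [term_zero]
  have h1 : (∑' p : Nat.Primes, if (p : ℕ) ∣ n then term ↗Fmu s n else 0)
      = ∑' p : Nat.Primes,
          (fun q : ℕ => if q ∈ n.primeFactors then term ↗Fmu s n else 0) (p : ℕ) := by
    refine tsum_congr fun p => ?_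
    simp only
    by_cases h : (p : ℕ) ∣ n
    · rw [if_pos h, if_pos (Nat.mem_primeFactors.mpr ⟨p.2, h, hn⟩)]
    · rw [if_neg h, if_neg (fun hc => h (Nat.mem_primeFactors.mp hc).2.1)]
  have h2 : (∑' p : Nat.Primes,
        (fun q : ℕ => if q ∈ n.primeFactors then term ↗Fmu s n else 0) (p : ℕ))
      = ∑' q : ℕ, (if q ∈ n.primeFactors then term ↗Fmu s n else 0) := by
    refine Function.Injective.tsum_eq (f := fun q : ℕ => if q ∈ n.primeFactors then term ↗Fmu s n else 0) Nat.Primes.coe_nat_injective ?_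
    intro q hq
    rw [Function.mem_support] at hq
    have hq2 : q ∈ n.primeFactors := by
      by_contra hc
      exact hq (if_neg hc)
    exact ⟨⟨q, Nat.prime_of_mem_primeFactors hq2⟩, rfl⟩
  have h3 : (∑' q : ℕ, if q ∈ n.primeFactors then term ↗Fmu s n else 0)
      = (n.primeFactors.card : ℂ) * term ↗Fmu s n := by
    rw [tsum_eq_sum (s := n.primeFactors) (fun q hq => if_neg hq),
      Finset.sum_congr rfl (fun q hq => if_pos hq), Finset.sum_const, nsmul_eq_mul]
  rw [h1, h2, h3, term_of_ne_zero hn]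
  show _ = _ * ((Fmu n : ℂ) / _)
  rw [Fmu_apply]
  ring

lemma norm_term_p_mul_le (s : ℂ) (p : Nat.Primes) (m : ℕ) :
    ‖term ↗Fmu s ((p : ℕ) * m)‖ ≤ ((p : ℕ) : ℝ) ^ (-s.re) * ‖term ↗Fmu s m‖ := by
  rcases eq_or_ne m 0 with rfl | hm
  · simp only [mul_zero, term_zero, norm_zero]
    positivity
  have hpm : (p : ℕ) * m ≠ 0 := mul_ne_zero p.2.ne_zero hm
  rw [norm_term_eq, norm_term_eq, if_neg hpm, if_neg hm]
  have hm0 : (0:ℝ) < (m : ℝ) := by exact_mod_cast Nat.pos_of_ne_zero hm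
  have hp0 : (0:ℝ) < ((p : ℕ) : ℝ) := by exact_mod_cast p.2.pos
  have hle : ‖(Fmu ((p : ℕ) * m) : ℂ)‖ ≤ ‖(Fmu m : ℂ)‖ := by
    simp only [Fmu_apply, Complex.norm_natCast]
    exact_mod_cast natAbs_moebius_mul_le _ m
  have hcast : (((p : ℕ) * m : ℕ) : ℝ) ^ s.re = ((p : ℕ) : ℝ) ^ s.re * (m : ℝ) ^ s.re := by
    push_cast
    rw [Real.mul_rpow (by positivity) (by positivity)]
  rw [hcast, Real.rpow_neg (by positivity)]
  have hrw : (((p : ℕ) : ℝ) ^ s.re)⁻¹ * (‖(Fmu m : ℂ)‖ / (m : ℝ) ^ s.re)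
      = ‖(Fmu m : ℂ)‖ / (((p : ℕ) : ℝ) ^ s.re * (m : ℝ) ^ s.re) := by
    field_simp
  show _ ≤ (((p : ℕ) : ℝ) ^ s.re)⁻¹ * (‖(Fmu m : ℂ)‖ / (m : ℝ) ^ s.re)
  rw [hrw]
  have hden : (0:ℝ) < ((p : ℕ) : ℝ) ^ s.re * (m : ℝ) ^ s.re := by positivity
  gcongr

lemma summable_S {s : ℂ} (hs : 1 < s.re) :
    Summable (Function.uncurry fun (p : Nat.Primes) (n : ℕ) =>
      if (p : ℕ) ∣ n then term ↗Fmu s n else 0) := by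
  apply Summable.of_norm
  apply (summable_prod_of_nonneg (fun _ => norm_nonneg _)).mpr
  constructor
  · intro p
    exact (summable_if_dvd hs p).norm
  · set C := ∑' m : ℕ, ‖term ↗Fmu s m‖ with hC
    have hCs : Summable fun m : ℕ => ‖term ↗Fmu s m‖ := (hFsummable hs).norm
    have hgs : Summable fun p : Nat.Primes => ((p : ℕ) : ℝ) ^ (-s.re) * C :=
      (Nat.Primes.summable_rpow.mpr (by linarith)).mul_right C
    apply Summable.of_nonneg_of_le (fun p => tsum_nonneg fun n => norm_nonneg _) _ hgs
    intro p
    have h1 : (fun n : ℕ => ‖if (p : ℕ) ∣ n then term ↗Fmu s n else 0‖)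
        = fun n : ℕ => if (p : ℕ) ∣ n then ‖term ↗Fmu s n‖ else 0 := by
      funext n
      split
      · rfl
      · simp
    have hrow : Summable fun m : ℕ => ‖term ↗Fmu s ((p : ℕ) * m)‖ := by
      apply Summable.of_nonneg_of_le (fun m => norm_nonneg _) (norm_term_p_mul_le s p)
      exact hCs.mul_left _
    calc ∑' n : ℕ, ‖if (p : ℕ) ∣ n then term ↗Fmu s n else 0‖
        = ∑' n : ℕ, if (p : ℕ) ∣ n then ‖term ↗Fmu s n‖ else 0 := by rw [h1]
      _ = ∑' m : ℕ, ‖term ↗Fmu s ((p : ℕ) * m)‖ := tsum_if_dvd _ p.2.ne_zero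
      _ ≤ ∑' m : ℕ, ((p : ℕ) : ℝ) ^ (-s.re) * ‖term ↗Fmu s m‖ :=
          Summable.tsum_le_tsum (norm_term_p_mul_le s p) hrow (hCs.mul_left _)
      _ = ((p : ℕ) : ℝ) ^ (-s.re) * C := tsum_mul_left

end
end Stmt19

open Stmt19 Complex LSeries
open scoped LSeries.notation

/-- For `Re s > 1`,
`∑_{n ≥ 1} |μ(n)| ω(n)/n^s = (ζ(s)/ζ(2s)) · P(s, 1)`, where `P(s, 1) = ∑_p 1/(p^s + 1)`
is the shifted prime zeta function. -/
theorem stmt_19 (s : ℂ) (hs : 1 < s.re) :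
    ∑' n : ℕ, ((moebius n).natAbs : ℂ) * (n.primeFactors.card : ℂ) / (n : ℂ) ^ s =
      riemannZeta s / riemannZeta (2 * s) *
        ∑' p : Nat.Primes, 1 / (((p : ℕ) : ℂ) ^ s + 1) := by
  calc ∑' n : ℕ, ((moebius n).natAbs : ℂ) * (n.primeFactors.card : ℂ) / (n : ℂ) ^ s
      = ∑' (n : ℕ) (p : Nat.Primes), (if (p : ℕ) ∣ n then term ↗Fmu s n else 0) :=
        tsum_congr (point hs)
    _ = ∑' (p : Nat.Primes) (n : ℕ), (if (p : ℕ) ∣ n then term ↗Fmu s n else 0) :=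
        Summable.tsum_comm (summable_S hs)
    _ = ∑' p : Nat.Primes, LSeries ↗Fmu s * (1 / (((p : ℕ) : ℂ) ^ s + 1)) := by
        refine tsum_congr fun p => ?_
        rw [Sp_eq hs p, mul_one_div]
    _ = LSeries ↗Fmu s * ∑' p : Nat.Primes, 1 / (((p : ℕ) : ℂ) ^ s + 1) := tsum_mul_left
    _ = riemannZeta s / riemannZeta (2 * s) *
          ∑' p : Nat.Primes, 1 / (((p : ℕ) : ℂ) ^ s + 1) := by rw [LSeries_Fmu hs]
end
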